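/- Let A, B, C be finite groups with A abelian. Then there exists a surjective group homomorphism from (A ≀ B) ≀ C onto (A × B) ≀ C. -/

import Mathlib

/-- The automorphism action of `G` on `G → H` by right translation:
`(wrAut H G g) f x = f (x * g)`, so that the semidirect product below has
multiplication `(f₁, g₁)(f₂, g₂) = (f₁ · f₂^{g₁⁻¹}, g₁g₂)` with
`f₂^{g₁⁻¹}(x) = f₂ (x * g₁)`. -/
def wrAut (H G : Type*) [Group H] [Group G] : G →* MulAut (G → H) where
  toFun g :=
    { toFun := fun f x => f (x * g)
      invFun := fun f x => f (x * g⁻¹)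
      left_inv := fun f => funext fun x => by simp [mul_assoc]
      right_inv := fun f => funext fun x => by simp [mul_assoc]
      map_mul' := fun f₁ f₂ => rfl }
  map_one' := MulEquiv.ext fun f => funext fun x => by simp
  map_mul' := fun g₁ g₂ => MulEquiv.ext fun f => funext fun x => by simp [mul_assoc]

/-- The standard (regular) wreath product `H ≀ G`. -/
abbrev Wr (H G : Type*) [Group H] [Group G] := SemidirectProduct (G → H) G (wrAut H G)

open scoped Classical in
/-- The "augmentation" map `A ≀ B → A × B` for `A` abelian and `B` finite. -/
noncomputable def wrAug (A B : Type*) [CommGroup A] [Group B] [Finite B] :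
    Wr A B →* A × B :=
  haveI := Fintype.ofFinite B
  { toFun := fun x => (∏ b : B, x.left b, x.right)
    map_one' := by simp
    map_mul' := fun x y => by
      ext
      · show (∏ b : B, (x.left * (wrAut A B x.right) y.left) b) = _
        simp only [Pi.mul_apply, Finset.prod_mul_distrib]
        congr 1
        exact Equiv.prod_comp (Equiv.mulRight x.right) y.left
      · rfl }

theorem wrAug_surjective (A B : Type*) [CommGroup A] [Group B] [Finite B] :
    Function.Surjective (wrAug A B) := by
  classical
  rintro ⟨a, b⟩
  refine ⟨⟨fun x => if x = 1 then a else 1, b⟩, ?_⟩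
  simp only [wrAug, MonoidHom.coe_mk, OneHom.coe_mk, Prod.mk.injEq]
  refine ⟨?_, trivial⟩
  rw [Finset.prod_eq_single (1 : B)]
  · simp
  · intro c _ hc; simp [hc]
  · simp

/-- Functoriality: a hom `H →* K` induces `H ≀ C →* K ≀ C`. -/
def wrMap {H K C : Type*} [Group H] [Group K] [Group C] (φ : H →* K) :
    Wr H C →* Wr K C where
  toFun x := ⟨φ ∘ x.left, x.right⟩
  map_one' := by
    ext <;> simp
  map_mul' x y := by
    ext c
    · show φ ((x.left * (wrAut H C x.right) y.left) c) =
        ((φ ∘ x.left) * (wrAut K C x.right) (φ ∘ y.left)) c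
      simp [wrAut]
    · rfl

theorem wrMap_surjective {H K C : Type*} [Group H] [Group K] [Group C] (φ : H →* K)
    (hφ : Function.Surjective φ) : Function.Surjective (wrMap (C := C) φ) := by
  rintro ⟨g, c⟩
  refine ⟨⟨Function.surjInv hφ ∘ g, c⟩, ?_⟩
  have : φ ∘ (Function.surjInv hφ ∘ g) = g := by
    funext x; exact Function.surjInv_eq hφ (g x)
  simp only [wrMap, MonoidHom.coe_mk, OneHom.coe_mk]
  exact SemidirectProduct.ext this rfl

/-- For finite groups `A, B, C` with `A` abelian there is a
surjective homomorphism `(A ≀ B) ≀ C → (A × B) ≀ C`. -/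
theorem stmt6 (A B C : Type*) [CommGroup A] [Group B] [Group C]
    [Finite A] [Finite B] [Finite C] :
    ∃ π : Wr (Wr A B) C →* Wr (A × B) C, Function.Surjective π := by
  exact ⟨wrMap (wrAug A B), wrMap_surjective _ (wrAug_surjective A B)⟩
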